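/- Let p₀ > 0, q₀ ∈ (0, 1/4) small enough, and let u₀ = J_{q₀²} * v₀ be the mollification of the peakon-antipeakon profile v₀ (with v₀ as in the standard construction). Then u₀'(q₀) < 0; more precisely, writing u₀'(q₀) = K₁ + K₂ with K₁ = ∫_{−q₀² < y−q₀ ≤ 0} v₀'(y) J_{q₀²}(q₀−y) dy and K₂ = ∫_{0 < y−q₀ < q₀²} v₀'(y) J_{q₀²}(q₀−y) dy, one has K₁ = −(1/2)p₀e^{−q₀} and K₂ ≤ (1/2)p₀q₀e^{−q₀}, hence u₀'(q₀) ≤ −(1/2)p₀e^{−q₀}(1 − q₀) < 0. -/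

import Mathlib

open Real MeasureTheory Set

/-- The anti-symmetric peakon-antipeakon profile. -/
noncomputable def v0 (p q : ℝ) : ℝ → ℝ := fun x =>
  if x < -q then p * q * Real.exp x
  else if x ≤ q then -p * Real.exp (-q) * x
  else -p * q * Real.exp (-x)

/-- The derivative of the peakon-antipeakon profile. -/
noncomputable def dv0 (p q : ℝ) : ℝ → ℝ := fun x =>
  if x < -q then p * q * Real.exp x
  else if x < q then -p * Real.exp (-q)
  else p * q * Real.exp (-x)

/-- The Friedrichs mollifier bump function. -/
noncomputable def J : ℝ → ℝ := fun x =>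
  if |x| < 1 then
    Real.exp (1 / (x ^ 2 - 1)) / (∫ y in Set.Ioo (-1 : ℝ) 1, Real.exp (1 / (y ^ 2 - 1)))
  else 0

/-- The rescaled mollifier `J_ε(x) = ε⁻¹ J(x/ε)`. -/
noncomputable def Jmol (ε : ℝ) : ℝ → ℝ := fun x => (1 / ε) * J (x / ε)

/-- The mollified initial data `u₀ = J_{q₀²} * v₀`. -/
noncomputable def u0 (p q : ℝ) : ℝ → ℝ := fun x =>
  ∫ y : ℝ, Jmol (q ^ 2) y * v0 p q (x - y)


section PeakonAux

noncomputable def Jc : ℝ := ∫ y in Set.Ioo (-1 : ℝ) 1, Real.exp (1 / (y ^ 2 - 1))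

lemma measurable_bump : Measurable fun y : ℝ => Real.exp (1 / (y ^ 2 - 1)) := by
  fun_prop

lemma bump_le_one {y : ℝ} (h : y ^ 2 ≤ 1) : Real.exp (1 / (y ^ 2 - 1)) ≤ 1 := by
  rcases eq_or_lt_of_le h with h' | h'
  · simp [← h']
  · rw [Real.exp_le_one_iff]
    apply div_nonpos_of_nonneg_of_nonpos zero_le_one
    linarith

lemma integrableOn_bump : IntegrableOn (fun y : ℝ => Real.exp (1 / (y ^ 2 - 1))) (Set.Icc (-1) 1) := by
  apply Integrable.mono' (integrableOn_const (C := (1:ℝ)) measure_Icc_lt_top.ne)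
    measurable_bump.aestronglyMeasurable
  filter_upwards [ae_restrict_mem measurableSet_Icc] with y hy
  rw [Real.norm_eq_abs, abs_of_nonneg (Real.exp_pos _).le]
  exact bump_le_one (by nlinarith [hy.1, hy.2])

lemma Jc_pos : 0 < Jc := by
  have hsub : Set.Ioo (-(1:ℝ)/2) (1/2) ⊆ Set.Ioo (-1 : ℝ) 1 := by
    intro x hx; exact ⟨by linarith [hx.1], by linarith [hx.2]⟩
  have h1 : Real.exp (-2) * 1 ≤ ∫ y in Set.Ioo (-(1:ℝ)/2) (1/2), Real.exp (1 / (y ^ 2 - 1)) := by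
    have : ∀ y ∈ Set.Ioo (-(1:ℝ)/2) (1/2), Real.exp (-2) ≤ Real.exp (1 / (y ^ 2 - 1)) := by
      intro y hy
      apply Real.exp_le_exp.2
      rw [le_div_iff_of_neg (by nlinarith [hy.1, hy.2])]
      nlinarith [hy.1, hy.2]
    calc Real.exp (-2) * 1 = ∫ _ in Set.Ioo (-(1:ℝ)/2) (1/2), Real.exp (-2) := by
          simp [Real.volume_Ioo]; norm_num
      _ ≤ _ := setIntegral_mono_on (integrableOn_const measure_Ioo_lt_top.ne)
          ((integrableOn_bump.mono_set (hsub.trans Set.Ioo_subset_Icc_self))) measurableSet_Ioo this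
  have h2 : (∫ y in Set.Ioo (-(1:ℝ)/2) (1/2), Real.exp (1 / (y ^ 2 - 1))) ≤ Jc := by
    apply setIntegral_mono_set (integrableOn_bump.mono_set Set.Ioo_subset_Icc_self)
      (Filter.Eventually.of_forall fun y => (Real.exp_pos _).le)
      (HasSubset.Subset.eventuallyLE hsub)
  have := Real.exp_pos (-2)
  calc (0:ℝ) < Real.exp (-2) * 1 := by linarith
    _ ≤ Jc := h1.trans h2

lemma J_def (x : ℝ) : J x = if |x| < 1 then Real.exp (1 / (x ^ 2 - 1)) / Jc else 0 := rfl

lemma J_nonneg (x : ℝ) : 0 ≤ J x := by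
  rw [J_def]; split
  · exact div_nonneg (Real.exp_pos _).le Jc_pos.le
  · exact le_refl 0
lemma J_zero {x : ℝ} (h : 1 ≤ |x|) : J x = 0 := by
  rw [J_def, if_neg (not_lt.2 h)]
lemma J_le (x : ℝ) : J x ≤ Jc⁻¹ := by
  rw [J_def]; split_ifs with h
  · rw [div_eq_mul_inv]
    have h2 : x ^ 2 ≤ 1 := by nlinarith [abs_lt.1 h |>.1, abs_lt.1 h |>.2]
    nlinarith [bump_le_one h2, inv_pos.2 Jc_pos, Real.exp_pos (1 / (x ^ 2 - 1))]
  · exact (inv_pos.2 Jc_pos).le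
lemma J_even (x : ℝ) : J (-x) = J x := by
  simp [J_def, abs_neg, neg_pow]
lemma measurable_J : Measurable J := by
  unfold J
  exact Measurable.ite (measurableSet_lt (measurable_norm.comp measurable_id) measurable_const)
    (measurable_bump.div_const _) measurable_const

lemma integrable_of_bound_support {f : ℝ → ℝ} {a b C : ℝ} (hm : Measurable f)
    (hb : ∀ x, |f x| ≤ C) (h0 : ∀ x, x ∉ Set.Ioo a b → f x = 0) : Integrable f := by
  have h1 : IntegrableOn f (Set.Ioo a b) := by
    apply Integrable.mono' (integrableOn_const (C := C) measure_Ioo_lt_top.ne)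
      hm.aestronglyMeasurable
    exact Filter.Eventually.of_forall fun x => by rw [Real.norm_eq_abs]; exact hb x
  exact h1.integrable_of_forall_notMem_eq_zero h0

lemma integrable_J : Integrable J := by
  apply integrable_of_bound_support (a := -1) (b := 1) measurable_J
    (fun x => by rw [abs_of_nonneg (J_nonneg x)]; exact J_le x)
  intro x hx
  apply J_zero
  rcases not_and_or.1 (Set.mem_Ioo.not.1 hx ∘ Set.mem_Ioo.2) with h | h
  · exact le_abs.2 (Or.inr (by linarith [not_lt.1 h]))
  · exact le_abs.2 (Or.inl (not_lt.1 h))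

-- Jmol basics
lemma Jmol_nonneg {ε : ℝ} (hε : 0 < ε) (x : ℝ) : 0 ≤ Jmol ε x :=
  mul_nonneg (by positivity) (J_nonneg _)

lemma Jmol_zero {ε x : ℝ} (hε : 0 < ε) (h : ε ≤ |x|) : Jmol ε x = 0 := by
  have : (1:ℝ) ≤ |x / ε| := by
    rw [abs_div, abs_of_pos hε, le_div_iff₀ hε, one_mul]; exact h
  simp [Jmol, J_zero this]

lemma Jmol_le {ε : ℝ} (hε : 0 < ε) (x : ℝ) : Jmol ε x ≤ (1 / ε) * Jc⁻¹ :=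
  mul_le_mul_of_nonneg_left (J_le _) (by positivity)

lemma Jmol_even (ε x : ℝ) : Jmol ε (-x) = Jmol ε x := by
  rw [Jmol, Jmol, neg_div, J_even]

lemma measurable_Jmol (ε : ℝ) : Measurable (Jmol ε) :=
  measurable_const.mul (measurable_J.comp (measurable_id.div_const ε))

lemma bump_even (y : ℝ) : Real.exp (1 / ((-y) ^ 2 - 1)) = Real.exp (1 / (y ^ 2 - 1)) := by
  rw [neg_pow]; norm_num

lemma Jc_eq : Jc = 2 * ∫ y in (0:ℝ)..1, Real.exp (1 / (y ^ 2 - 1)) := by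
  have ii1 : IntervalIntegrable (fun y : ℝ => Real.exp (1 / (y ^ 2 - 1))) volume (-1) 0 := by
    apply (integrableOn_bump.mono_set _).intervalIntegrable
    rw [Set.uIcc_of_le (by norm_num)]
    exact Set.Icc_subset_Icc (by norm_num) (by norm_num)
  have ii2 : IntervalIntegrable (fun y : ℝ => Real.exp (1 / (y ^ 2 - 1))) volume 0 1 := by
    apply (integrableOn_bump.mono_set _).intervalIntegrable
    rw [Set.uIcc_of_le (by norm_num)]
    exact Set.Icc_subset_Icc (by norm_num) (by norm_num)
  have h1 : Jc = ∫ y in (-1:ℝ)..1, Real.exp (1 / (y ^ 2 - 1)) := by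
    rw [intervalIntegral.integral_of_le (by norm_num), integral_Ioc_eq_integral_Ioo, Jc]
  have h2 : (∫ y in (-1:ℝ)..(0:ℝ), Real.exp (1 / (y ^ 2 - 1)))
      = ∫ y in (0:ℝ)..1, Real.exp (1 / (y ^ 2 - 1)) := by
    have := intervalIntegral.integral_comp_neg (a := (0:ℝ)) (b := 1)
      (f := fun y : ℝ => Real.exp (1 / (y ^ 2 - 1)))
    simp only [neg_zero, bump_even] at this
    rw [← this]
  have h3 := intervalIntegral.integral_add_adjacent_intervals ii1 ii2
  rw [h1, ← h3, h2]; ring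

lemma intJ : ∫ x in (0:ℝ)..1, J x = 1 / 2 := by
  rw [intervalIntegral.integral_of_le zero_le_one, integral_Ioc_eq_integral_Ioo]
  have hcong : Set.EqOn J (fun x => Real.exp (1 / (x ^ 2 - 1)) / Jc) (Set.Ioo 0 1) := by
    intro x hx
    rw [J_def, if_pos]
    rw [abs_lt]; exact ⟨by linarith [hx.1], hx.2⟩
  rw [setIntegral_congr_fun measurableSet_Ioo hcong]
  rw [integral_div]
  have : (∫ x in Set.Ioo (0:ℝ) 1, Real.exp (1 / (x ^ 2 - 1)))
      = ∫ y in (0:ℝ)..1, Real.exp (1 / (y ^ 2 - 1)) := by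
    rw [intervalIntegral.integral_of_le zero_le_one, integral_Ioc_eq_integral_Ioo]
  rw [this]
  rw [Jc_eq]
  have h2 : (0:ℝ) < 2 * ∫ y in (0:ℝ)..1, Real.exp (1 / (y ^ 2 - 1)) := Jc_eq ▸ Jc_pos
  have h3 : (∫ y in (0:ℝ)..1, Real.exp (1 / (y ^ 2 - 1))) ≠ 0 := ne_of_gt (by linarith)
  field_simp

lemma intJmol {ε : ℝ} (hε : 0 < ε) : ∫ x in (0:ℝ)..ε, Jmol ε x = 1 / 2 := by
  simp only [Jmol]
  rw [intervalIntegral.integral_const_mul, intervalIntegral.integral_comp_div _ hε.ne']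
  rw [zero_div, div_self hε.ne', intJ]
  field_simp
  simp only [smul_eq_mul]; ring

lemma intJmol_neg {ε : ℝ} (hε : 0 < ε) : ∫ x in (-ε)..(0:ℝ), Jmol ε x = 1 / 2 := by
  have := intervalIntegral.integral_comp_neg (a := (0:ℝ)) (b := ε) (f := Jmol ε)
  simp only [neg_zero, Jmol_even] at this
  rw [← this, intJmol hε]

lemma integrable_Jmol {ε : ℝ} (hε : 0 < ε) : Integrable (Jmol ε) := by
  apply integrable_of_bound_support (a := -ε) (b := ε) (C := (1 / ε) * Jc⁻¹) (measurable_Jmol ε)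
  · intro x
    rw [abs_of_nonneg (Jmol_nonneg hε x)]; exact Jmol_le hε x
  · intro x hx
    apply Jmol_zero hε
    rcases not_and_or.1 (Set.mem_Ioo.not.1 hx ∘ Set.mem_Ioo.2) with h | h
    · exact le_abs.2 (Or.inr (by linarith [not_lt.1 h]))
    · exact le_abs.2 (Or.inl (not_lt.1 h))

variable {p q : ℝ}

lemma v0_eq_mid (h1 : -q ≤ x) (h2 : x ≤ q) : v0 p q x = -p * Real.exp (-q) * x := by
  rw [v0, if_neg (not_lt.2 h1), if_pos h2]

lemma v0_eq_right (hq : 0 < q) (h : q ≤ x) : v0 p q x = -(p * q) * Real.exp (-x) := by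
  rw [v0, if_neg (not_lt.2 (by linarith))]
  rcases eq_or_lt_of_le h with h' | h'
  · rw [if_pos h'.ge, ← h']; ring
  · rw [if_neg (not_le.2 h')]; ring

lemma dv0_eq_mid (h1 : -q ≤ x) (h2 : x < q) : dv0 p q x = -p * Real.exp (-q) := by
  rw [dv0, if_neg (not_lt.2 h1), if_pos h2]

lemma dv0_eq_right (hq : 0 < q) (h : q ≤ x) : dv0 p q x = p * q * Real.exp (-x) := by
  rw [dv0, if_neg (not_lt.2 (by linarith)), if_neg (not_lt.2 h)]

lemma abs_dv0_le (hp : 0 < p) (hq : 0 < q) (hq1 : q ≤ 1) (x : ℝ) : |dv0 p q x| ≤ p := by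
  rw [dv0]
  split_ifs with h1 h2
  · rw [abs_of_nonneg (by positivity)]
    have he : Real.exp x ≤ 1 := Real.exp_le_one_iff.2 (by linarith)
    calc p * q * Real.exp x ≤ p * q * 1 :=
          mul_le_mul_of_nonneg_left he (by positivity)
      _ = p * q := by ring
      _ ≤ p * 1 := mul_le_mul_of_nonneg_left hq1 hp.le
      _ = p := by ring
  · rw [abs_mul, abs_neg, abs_of_pos hp, abs_of_pos (Real.exp_pos _)]
    have he : Real.exp (-q) ≤ 1 := Real.exp_le_one_iff.2 (by linarith)
    calc p * Real.exp (-q) ≤ p * 1 := mul_le_mul_of_nonneg_left he hp.le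
      _ = p := by ring
  · push_neg at h1 h2
    rw [abs_of_nonneg (by positivity)]
    have he : Real.exp (-x) ≤ 1 := Real.exp_le_one_iff.2 (by linarith)
    calc p * q * Real.exp (-x) ≤ p * q * 1 :=
          mul_le_mul_of_nonneg_left he (by positivity)
      _ = p * q := by ring
      _ ≤ p * 1 := mul_le_mul_of_nonneg_left hq1 hp.le
      _ = p := by ring

lemma abs_v0_le (hp : 0 < p) (hq : 0 < q) (hq1 : q ≤ 1) (x : ℝ) : |v0 p q x| ≤ p := by
  rw [v0]
  split_ifs with h1 h2
  · rw [abs_of_nonneg (by positivity)]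
    have he : Real.exp x ≤ 1 := Real.exp_le_one_iff.2 (by linarith)
    calc p * q * Real.exp x ≤ p * q * 1 :=
          mul_le_mul_of_nonneg_left he (by positivity)
      _ = p * q := by ring
      _ ≤ p * 1 := mul_le_mul_of_nonneg_left hq1 hp.le
      _ = p := by ring
  · push_neg at h1
    have hx : |x| ≤ q := abs_le.2 ⟨by linarith, h2⟩
    have he : Real.exp (-q) ≤ 1 := Real.exp_le_one_iff.2 (by linarith)
    calc |-p * Real.exp (-q) * x| = p * Real.exp (-q) * |x| := by
          rw [abs_mul, abs_mul, abs_neg, abs_of_pos hp, abs_of_pos (Real.exp_pos _)]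
      _ ≤ p * 1 * 1 := by
          apply mul_le_mul (mul_le_mul_of_nonneg_left he hp.le) (hx.trans hq1) (abs_nonneg x)
          positivity
      _ = p := by ring
  · push_neg at h1 h2
    rw [show -p * q * Real.exp (-x) = -(p * q * Real.exp (-x)) by ring, abs_neg,
      abs_of_nonneg (by positivity)]
    have he : Real.exp (-x) ≤ 1 := Real.exp_le_one_iff.2 (by linarith)
    calc p * q * Real.exp (-x) ≤ p * q * 1 :=
          mul_le_mul_of_nonneg_left he (by positivity)
      _ = p * q := by ring
      _ ≤ p * 1 := mul_le_mul_of_nonneg_left hq1 hp.le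
      _ = p := by ring

lemma measurable_v0 : Measurable (v0 p q) := by
  unfold v0
  refine Measurable.ite (measurableSet_lt measurable_id measurable_const) (by fun_prop)
    (Measurable.ite (measurableSet_le measurable_id measurable_const) (by fun_prop) (by fun_prop))

lemma measurable_dv0 : Measurable (dv0 p q) := by
  unfold dv0
  refine Measurable.ite (measurableSet_lt measurable_id measurable_const) (by fun_prop)
    (Measurable.ite (measurableSet_lt measurable_id measurable_const) (by fun_prop) (by fun_prop))

-- the key two-point Lipschitz estimate on [0,∞)
lemma exp_sub_exp_le {a b : ℝ} (hb : 0 ≤ b) (hba : b ≤ a) :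
    Real.exp (-b) - Real.exp (-a) ≤ a - b := by
  have h1 := Real.add_one_le_exp (b - a)
  have h2 : Real.exp (-b) * Real.exp (b - a) = Real.exp (-a) := by
    rw [← Real.exp_add]; ring_nf
  have h3 : Real.exp (-b) ≤ 1 := Real.exp_le_one_iff.2 (by linarith)
  nlinarith [Real.exp_pos (-b)]

lemma v0_lip_aux (hp : 0 < p) (hq : 0 < q) (hq1 : q ≤ 1) {a b : ℝ} (hb : 0 ≤ b) (hba : b ≤ a) :
    |v0 p q a - v0 p q b| ≤ p * (a - b) := by
  rcases le_or_gt a q with haq | haq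
  · rw [v0_eq_mid (by linarith) haq, v0_eq_mid (by linarith) (by linarith)]
    have : -p * Real.exp (-q) * a - -p * Real.exp (-q) * b = -(p * Real.exp (-q) * (a - b)) := by
      ring
    rw [this, abs_neg, abs_of_nonneg (mul_nonneg (by positivity) (by linarith))]
    have he : Real.exp (-q) ≤ 1 := Real.exp_le_one_iff.2 (by linarith)
    calc p * Real.exp (-q) * (a - b) ≤ p * 1 * (a - b) :=
          mul_le_mul_of_nonneg_right (mul_le_mul_of_nonneg_left he hp.le) (by linarith)
      _ = p * (a - b) := by ring
  · rcases le_or_gt q b with hbq | hbq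
    · rw [v0_eq_right hq haq.le, v0_eq_right hq hbq]
      have : -(p * q) * Real.exp (-a) - -(p * q) * Real.exp (-b)
          = p * q * (Real.exp (-b) - Real.exp (-a)) := by ring
      have hd : Real.exp (-a) ≤ Real.exp (-b) := Real.exp_le_exp.2 (by linarith)
      rw [this, abs_of_nonneg (mul_nonneg (by positivity) (by linarith))]
      calc p * q * (Real.exp (-b) - Real.exp (-a)) ≤ p * q * (a - b) :=
            mul_le_mul_of_nonneg_left (exp_sub_exp_le hb hba) (by positivity)
        _ ≤ p * 1 * (a - b) :=
            mul_le_mul_of_nonneg_right (mul_le_mul_of_nonneg_left hq1 hp.le) (by linarith)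
        _ = p * (a - b) := by ring
    · -- b < q < a
      have h1 : |v0 p q a - v0 p q q| ≤ p * (a - q) := by
        rw [v0_eq_right hq haq.le, v0_eq_right hq le_rfl]
        have : -(p * q) * Real.exp (-a) - -(p * q) * Real.exp (-q)
            = p * q * (Real.exp (-q) - Real.exp (-a)) := by ring
        have hd : Real.exp (-a) ≤ Real.exp (-q) := Real.exp_le_exp.2 (by linarith)
        rw [this, abs_of_nonneg (mul_nonneg (by positivity) (by linarith))]
        calc p * q * (Real.exp (-q) - Real.exp (-a)) ≤ p * q * (a - q) :=
              mul_le_mul_of_nonneg_left (exp_sub_exp_le hq.le haq.le) (by positivity)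
          _ ≤ p * 1 * (a - q) :=
              mul_le_mul_of_nonneg_right (mul_le_mul_of_nonneg_left hq1 hp.le) (by linarith)
          _ = p * (a - q) := by ring
      have h2 : |v0 p q q - v0 p q b| ≤ p * (q - b) := by
        rw [v0_eq_mid (by linarith) le_rfl, v0_eq_mid (by linarith) (by linarith)]
        have : -p * Real.exp (-q) * q - -p * Real.exp (-q) * b
            = -(p * Real.exp (-q) * (q - b)) := by ring
        rw [this, abs_neg, abs_of_nonneg (mul_nonneg (by positivity) (by linarith))]
        have he : Real.exp (-q) ≤ 1 := Real.exp_le_one_iff.2 (by linarith)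
        calc p * Real.exp (-q) * (q - b) ≤ p * 1 * (q - b) :=
              mul_le_mul_of_nonneg_right (mul_le_mul_of_nonneg_left he hp.le) (by linarith)
          _ = p * (q - b) := by ring
      calc |v0 p q a - v0 p q b| ≤ |v0 p q a - v0 p q q| + |v0 p q q - v0 p q b| :=
            abs_sub_le _ _ _
        _ ≤ p * (a - q) + p * (q - b) := add_le_add h1 h2
        _ = p * (a - b) := by ring

lemma v0_dist (hp : 0 < p) (hq : 0 < q) (hq1 : q ≤ 1) {a b : ℝ} (ha : 0 ≤ a) (hb : 0 ≤ b) :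
    |v0 p q a - v0 p q b| ≤ p * |a - b| := by
  rcases le_total b a with h | h
  · rw [abs_of_nonneg (by linarith : (0:ℝ) ≤ a - b)]
    exact v0_lip_aux hp hq hq1 hb h
  · rw [abs_sub_comm, abs_of_nonpos (by linarith : a - b ≤ 0)]
    have := v0_lip_aux hp hq hq1 ha h
    calc |v0 p q b - v0 p q a| ≤ p * (b - a) := this
      _ = p * -(a - b) := by ring

-- HasDerivAt away from the corners
lemma v0_hasDerivAt (hq : 0 < q) {z : ℝ} (h1 : -q < z) (h2 : z ≠ q) :
    HasDerivAt (v0 p q) (dv0 p q z) z := by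
  rcases lt_or_gt_of_ne h2 with hz | hz
  · -- -q < z < q : locally linear
    have hev : (v0 p q) =ᶠ[nhds z] (fun x => -p * Real.exp (-q) * x) := by
      filter_upwards [Ioo_mem_nhds h1 hz] with x hx
      exact v0_eq_mid hx.1.le hx.2.le
    have hd : HasDerivAt (fun x : ℝ => -p * Real.exp (-q) * x) (-p * Real.exp (-q)) z := by
      simpa using (hasDerivAt_id z).const_mul (-p * Real.exp (-q))
    rw [dv0_eq_mid h1.le hz]
    exact hd.congr_of_eventuallyEq hev
  · -- z > q
    have hev : (v0 p q) =ᶠ[nhds z] (fun x => -(p * q) * Real.exp (-x)) := by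
      filter_upwards [Ioi_mem_nhds hz] with x hx
      exact v0_eq_right hq (le_of_lt hx)
    have hd : HasDerivAt (fun x : ℝ => -(p * q) * Real.exp (-x)) (p * q * Real.exp (-z)) z := by
      have h3 : HasDerivAt (fun x : ℝ => Real.exp (-x)) (-Real.exp (-z)) z := by
        simpa [Function.comp_def] using (Real.hasDerivAt_exp (-z)).comp z (hasDerivAt_neg z)
      have := h3.const_mul (-(p * q))
      rw [show p * q * Real.exp (-z) = -(p * q) * -Real.exp (-z) by ring]; exact this
    rw [dv0_eq_right hq hz.le]
    exact hd.congr_of_eventuallyEq hev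

end PeakonAux

theorem deriv_u0_at_q0_neg (p₀ q₀ : ℝ) (hp₀ : 0 < p₀) (hq₀ : q₀ ∈ Set.Ioo (0 : ℝ) (1 / 4))
    (K₁ K₂ : ℝ)
    (hK₁ : K₁ = ∫ y in Set.Ioc (q₀ - q₀ ^ 2) q₀, dv0 p₀ q₀ y * Jmol (q₀ ^ 2) (q₀ - y))
    (hK₂ : K₂ = ∫ y in Set.Ioo q₀ (q₀ + q₀ ^ 2), dv0 p₀ q₀ y * Jmol (q₀ ^ 2) (q₀ - y)) :
    deriv (u0 p₀ q₀) q₀ = K₁ + K₂ ∧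
      K₁ = -(1 / 2) * p₀ * Real.exp (-q₀) ∧
      K₂ ≤ (1 / 2) * p₀ * q₀ * Real.exp (-q₀) ∧
      deriv (u0 p₀ q₀) q₀ ≤ -(1 / 2) * p₀ * Real.exp (-q₀) * (1 - q₀) ∧
      deriv (u0 p₀ q₀) q₀ < 0 := by
  obtain ⟨hq, hq4⟩ := hq₀
  set ε : ℝ := q₀ ^ 2 with hεdef
  have hε : 0 < ε := by positivity
  have hεq : ε < q₀ / 4 := by nlinarith
  have hq1 : q₀ ≤ 1 := by linarith
  have hJcinv : (0:ℝ) < (1 / ε) * Jc⁻¹ := by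
    have := Jc_pos; positivity
  -- support lemma: if Jmol ε y ≠ 0 then |y| < ε
  have hsupp : ∀ y : ℝ, Jmol ε y ≠ 0 → |y| < ε := by
    intro y hy
    by_contra h
    exact hy (Jmol_zero hε (not_lt.1 h))
  have hnotmem : ∀ a b y : ℝ, y ∉ Set.Ioo a b → a = -ε → b = ε → ε ≤ |y| := by
    intro a b y hy ha hb
    subst ha; subst hb
    rcases not_and_or.1 (Set.mem_Ioo.not.1 hy ∘ Set.mem_Ioo.2) with h | h
    · exact le_abs.2 (Or.inr (by linarith [not_lt.1 h]))
    · exact le_abs.2 (Or.inl (not_lt.1 h))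
  -- Step 1: differentiation under the integral
  have key : HasDerivAt (u0 p₀ q₀) (∫ y : ℝ, Jmol ε y * dv0 p₀ q₀ (q₀ - y)) q₀ := by
    have hmeasF : ∀ x : ℝ, AEStronglyMeasurable (fun y => Jmol ε y * v0 p₀ q₀ (x - y)) volume :=
      fun x => ((measurable_Jmol ε).mul
        (measurable_v0.comp (measurable_const.sub measurable_id))).aestronglyMeasurable
    have hF_int : Integrable (fun y => Jmol ε y * v0 p₀ q₀ (q₀ - y)) := by
      apply integrable_of_bound_support (f := fun y => Jmol ε y * v0 p₀ q₀ (q₀ - y)) (a := -ε) (b := ε) (C := (1 / ε) * Jc⁻¹ * p₀)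
        ((measurable_Jmol ε).mul (measurable_v0.comp (measurable_const.sub measurable_id)))
      · intro y
        rw [abs_mul]
        apply mul_le_mul (by rw [abs_of_nonneg (Jmol_nonneg hε y)]; exact Jmol_le hε y)
          (abs_v0_le hp₀ hq hq1 _) (abs_nonneg _) hJcinv.le
      · intro y hy
        rw [Jmol_zero hε (hnotmem _ _ _ hy rfl rfl), zero_mul]
    have hF'_meas : AEStronglyMeasurable (fun y => Jmol ε y * dv0 p₀ q₀ (q₀ - y)) volume :=
      ((measurable_Jmol ε).mul
        (measurable_dv0.comp (measurable_const.sub measurable_id))).aestronglyMeasurable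
    have h_lip : ∀ᵐ y : ℝ, LipschitzOnWith (Real.nnabs (Jmol ε y * p₀))
        (fun x => Jmol ε y * v0 p₀ q₀ (x - y)) (Metric.ball q₀ (q₀ / 4)) := by
      apply Filter.Eventually.of_forall
      intro y
      rw [lipschitzOnWith_iff_dist_le_mul]
      intro x hx x' hx'
      by_cases hy : Jmol ε y = 0
      · simp [hy, Real.dist_eq]
      · have hyε := hsupp y hy
        have hxq : |x - q₀| < q₀ / 4 := by
          rw [← Real.dist_eq]; exact Metric.mem_ball.1 hx
        have hx'q : |x' - q₀| < q₀ / 4 := by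
          rw [← Real.dist_eq]; exact Metric.mem_ball.1 hx'
        have hxy : 0 ≤ x - y := by
          have h1 := abs_lt.1 hyε
          have h2 := abs_lt.1 hxq
          linarith
        have hx'y : 0 ≤ x' - y := by
          have h1 := abs_lt.1 hyε
          have h2 := abs_lt.1 hx'q
          linarith
        rw [Real.dist_eq, Real.dist_eq, Real.coe_nnabs]
        calc |Jmol ε y * v0 p₀ q₀ (x - y) - Jmol ε y * v0 p₀ q₀ (x' - y)|
            = |Jmol ε y| * |v0 p₀ q₀ (x - y) - v0 p₀ q₀ (x' - y)| := by
              rw [← abs_mul]; ring_nf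
          _ ≤ |Jmol ε y| * (p₀ * |(x - y) - (x' - y)|) := by
              apply mul_le_mul_of_nonneg_left (v0_dist hp₀ hq hq1 hxy hx'y) (abs_nonneg _)
          _ = |Jmol ε y * p₀| * |x - x'| := by
              rw [abs_mul, abs_of_pos hp₀, show (x - y) - (x' - y) = x - x' by ring]
              ring
    have bound_int : Integrable (fun y : ℝ => Jmol ε y * p₀) :=
      (integrable_Jmol hε).mul_const p₀
    have h_diff : ∀ᵐ y : ℝ, HasDerivAt (fun x => Jmol ε y * v0 p₀ q₀ (x - y))
        (Jmol ε y * dv0 p₀ q₀ (q₀ - y)) q₀ := by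
      have hae : ∀ᵐ y : ℝ, y ≠ (0:ℝ) := by
        have h0 : volume ({0} : Set ℝ) = 0 := measure_singleton 0
        have : ∀ᵐ y : ℝ, y ∉ ({0} : Set ℝ) := by
          rw [ae_iff]
          simpa using h0
        filter_upwards [this] with y hy
        simpa using hy
      filter_upwards [hae] with y hy
      by_cases hJ : Jmol ε y = 0
      · have : (fun x => Jmol ε y * v0 p₀ q₀ (x - y)) = fun _ => (0:ℝ) := by
          funext x; rw [hJ, zero_mul]
        rw [this, hJ, zero_mul]
        exact hasDerivAt_const _ 0
      · have hyε := hsupp y hJ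
        have h1 := abs_lt.1 hyε
        have hd : HasDerivAt (v0 p₀ q₀) (dv0 p₀ q₀ (q₀ - y)) (q₀ - y) := by
          apply v0_hasDerivAt hq
          · nlinarith
          · intro hcon
            apply hy
            linarith [sub_eq_self.1 (by linarith [hcon] : q₀ - y = q₀)]
        have hd2 : HasDerivAt (fun x => v0 p₀ q₀ (x - y)) (dv0 p₀ q₀ (q₀ - y)) q₀ := by
          have := hd.comp q₀ ((hasDerivAt_id q₀).sub_const y)
          simpa [Function.comp_def] using this
        exact hd2.const_mul (Jmol ε y)
    have := (hasDerivAt_integral_of_dominated_loc_of_lip (F := fun x y =>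
        Jmol ε y * v0 p₀ q₀ (x - y)) (F' := fun y => Jmol ε y * dv0 p₀ q₀ (q₀ - y))
        (bound := fun y => Jmol ε y * p₀) (Metric.ball_mem_nhds q₀ (by positivity : (0:ℝ) < q₀ / 4))
        (Filter.Eventually.of_forall hmeasF) hF_int hF'_meas h_lip bound_int h_diff).2
    exact this
  -- Step 2: substitution
  have hsub : (∫ y : ℝ, Jmol ε y * dv0 p₀ q₀ (q₀ - y))
      = ∫ z : ℝ, dv0 p₀ q₀ z * Jmol ε (q₀ - z) := by
    have h1 : (fun y : ℝ => Jmol ε y * dv0 p₀ q₀ (q₀ - y))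
        = fun y => (fun z => dv0 p₀ q₀ z * Jmol ε (q₀ - z)) (q₀ - y) := by
      funext y
      simp only [sub_sub_cancel]
      ring
    rw [h1, integral_sub_left_eq_self (fun z => dv0 p₀ q₀ z * Jmol ε (q₀ - z)) volume q₀]
  -- integrability of the substituted integrand
  have hint : Integrable (fun z : ℝ => dv0 p₀ q₀ z * Jmol ε (q₀ - z)) := by
    apply integrable_of_bound_support (f := fun z : ℝ => dv0 p₀ q₀ z * Jmol ε (q₀ - z))
      (a := q₀ - ε) (b := q₀ + ε) (C := p₀ * ((1 / ε) * Jc⁻¹))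
      (measurable_dv0.mul ((measurable_Jmol ε).comp (measurable_const.sub measurable_id)))
    · intro z
      rw [abs_mul]
      apply mul_le_mul (abs_dv0_le hp₀ hq hq1 z)
        (by rw [abs_of_nonneg (Jmol_nonneg hε _)]; exact Jmol_le hε _) (abs_nonneg _) hp₀.le
    · intro z hz
      have : ε ≤ |q₀ - z| := by
        rcases not_and_or.1 (Set.mem_Ioo.not.1 hz ∘ Set.mem_Ioo.2) with h | h
        · exact le_abs.2 (Or.inl (by linarith [not_lt.1 h]))
        · exact le_abs.2 (Or.inr (by linarith [not_lt.1 h]))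
      rw [Jmol_zero hε this, mul_zero]
  have hJmolq_int : Integrable (fun y : ℝ => Jmol ε (q₀ - y)) := by
    apply integrable_of_bound_support (f := fun z : ℝ => Jmol ε (q₀ - z))
      (a := q₀ - ε) (b := q₀ + ε) (C := (1 / ε) * Jc⁻¹)
      ((measurable_Jmol ε).comp (measurable_const.sub measurable_id))
    · intro z
      rw [abs_of_nonneg (Jmol_nonneg hε _)]; exact Jmol_le hε _
    · intro z hz
      have : ε ≤ |q₀ - z| := by
        rcases not_and_or.1 (Set.mem_Ioo.not.1 hz ∘ Set.mem_Ioo.2) with h | h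
        · exact le_abs.2 (Or.inl (by linarith [not_lt.1 h]))
        · exact le_abs.2 (Or.inr (by linarith [not_lt.1 h]))
      exact Jmol_zero hε this
  -- Step 3: split the integral
  have hsplit : (∫ z : ℝ, dv0 p₀ q₀ z * Jmol ε (q₀ - z)) = K₁ + K₂ := by
    have hvan : ∀ z : ℝ, z ∉ Set.Ioo (q₀ - ε) (q₀ + ε) → dv0 p₀ q₀ z * Jmol ε (q₀ - z) = 0 := by
      intro z hz
      have : ε ≤ |q₀ - z| := by
        rcases not_and_or.1 (Set.mem_Ioo.not.1 hz ∘ Set.mem_Ioo.2) with h | h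
        · exact le_abs.2 (Or.inl (by linarith [not_lt.1 h]))
        · exact le_abs.2 (Or.inr (by linarith [not_lt.1 h]))
      rw [Jmol_zero hε this, mul_zero]
    rw [← setIntegral_eq_integral_of_forall_compl_eq_zero hvan]
    rw [← Set.Ioc_union_Ioo_eq_Ioo (by linarith : q₀ - ε ≤ q₀) (by linarith : q₀ < q₀ + ε)]
    rw [setIntegral_union ?hdisj measurableSet_Ioo hint.integrableOn hint.integrableOn]
    · rw [hK₁, hK₂]
    case hdisj =>
      rw [Set.disjoint_left]
      rintro x ⟨_, hx1⟩ ⟨hx2, _⟩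
      exact absurd hx2 (not_lt.2 hx1)
  -- Step 4: value of K₁
  have hK₁val : K₁ = -(1 / 2) * p₀ * Real.exp (-q₀) := by
    rw [hK₁, integral_Ioc_eq_integral_Ioo]
    have hcong : Set.EqOn (fun y => dv0 p₀ q₀ y * Jmol ε (q₀ - y))
        (fun y => -p₀ * Real.exp (-q₀) * Jmol ε (q₀ - y)) (Set.Ioo (q₀ - ε) q₀) := by
      intro y hy
      simp only
      rw [dv0_eq_mid (by nlinarith [hy.1]) hy.2]
    rw [setIntegral_congr_fun measurableSet_Ioo hcong]
    simp_rw [mul_assoc]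
    rw [integral_const_mul]
    have hval : (∫ y in Set.Ioo (q₀ - ε) q₀, Real.exp (-q₀) * Jmol ε (q₀ - y))
        = Real.exp (-q₀) * (1 / 2) := by
      rw [integral_const_mul]
      congr 1
      rw [← integral_Ioc_eq_integral_Ioo, ← intervalIntegral.integral_of_le (by linarith)]
      rw [intervalIntegral.integral_comp_sub_left (Jmol ε) q₀]
      simp only [sub_self, sub_sub_cancel]
      exact intJmol hε
    rw [hval]
    ring
  -- Step 5: bound on K₂
  have hK₂val : K₂ ≤ (1 / 2) * p₀ * q₀ * Real.exp (-q₀) := by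
    rw [hK₂]
    have hmono : ∀ y ∈ Set.Ioo q₀ (q₀ + ε), dv0 p₀ q₀ y * Jmol ε (q₀ - y)
        ≤ (p₀ * q₀ * Real.exp (-q₀)) * Jmol ε (q₀ - y) := by
      intro y hy
      rw [dv0_eq_right hq hy.1.le]
      apply mul_le_mul_of_nonneg_right _ (Jmol_nonneg hε _)
      have : Real.exp (-y) ≤ Real.exp (-q₀) := Real.exp_le_exp.2 (by linarith [hy.1])
      exact mul_le_mul_of_nonneg_left this (by positivity)
    have hle := setIntegral_mono_on hint.integrableOn
      (hJmolq_int.const_mul (p₀ * q₀ * Real.exp (-q₀))).integrableOn measurableSet_Ioo hmono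
    have hval : (∫ y in Set.Ioo q₀ (q₀ + ε), (p₀ * q₀ * Real.exp (-q₀)) * Jmol ε (q₀ - y))
        = (p₀ * q₀ * Real.exp (-q₀)) * (1 / 2) := by
      rw [integral_const_mul]
      congr 1
      rw [← integral_Ioc_eq_integral_Ioo, ← intervalIntegral.integral_of_le (by linarith)]
      rw [intervalIntegral.integral_comp_sub_left (Jmol ε) q₀]
      have h1 : q₀ - (q₀ + ε) = -ε := by ring
      have h2 : q₀ - q₀ = (0:ℝ) := by ring
      rw [h1, h2]
      exact intJmol_neg hε
    calc (∫ y in Set.Ioo q₀ (q₀ + ε), dv0 p₀ q₀ y * Jmol ε (q₀ - y))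
        ≤ ∫ y in Set.Ioo q₀ (q₀ + ε), (p₀ * q₀ * Real.exp (-q₀)) * Jmol ε (q₀ - y) := hle
      _ = (p₀ * q₀ * Real.exp (-q₀)) * (1 / 2) := hval
      _ = (1 / 2) * p₀ * q₀ * Real.exp (-q₀) := by ring
  -- conclude
  have hderiv : deriv (u0 p₀ q₀) q₀ = K₁ + K₂ := by
    rw [key.deriv, hsub, hsplit]
  refine ⟨hderiv, hK₁val, hK₂val, ?_, ?_⟩
  · rw [hderiv, hK₁val]
    nlinarith [Real.exp_pos (-q₀), hK₂val]
  · rw [hderiv, hK₁val]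
    nlinarith [hK₂val,
      mul_pos (mul_pos hp₀ (Real.exp_pos (-q₀))) (show (0:ℝ) < 1 - q₀ by linarith)]
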